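/- Pointwise interaction bound for the Aubin–Talenti profiles: Let D ≥ 3 and W(r) = (1 + r²/(D(D-2)))^{-(D-2)/2}. Then W(r) ≤ min(1, (D(D-2))^{(D-2)/2} r^{-(D-2)}) for all r > 0, and consequently for 0 < λ ≤ μ, ∫₀^∞ W_λ(r)^{4/(D-2)} W_λ(r) W_μ(r) r^{D-1} dr ≲ (λ/μ)^{(D-2)/2}, with constant depending only on D. -/

import Mathlib

open Real MeasureTheory Set

noncomputable section

/-- The Aubin–Talenti profile `W(r) = (1 + r²/(D(D-2)))^{-(D-2)/2}`. -/
def W (D : ℕ) (r : ℝ) : ℝ :=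
  (1 + r ^ 2 / ((D : ℝ) * ((D : ℝ) - 2))) ^ (-(((D : ℝ) - 2) / 2))

/-- The `Ḣ¹`-invariant rescaling `W_λ(r) = λ^{-(D-2)/2} W(r/λ)`. -/
def Wl (D : ℕ) (lam r : ℝ) : ℝ := lam ^ (-(((D : ℝ) - 2) / 2)) * W D (r / lam)


section aux
variable {D : ℕ}

lemma hDr (hD : 3 ≤ D) : (3:ℝ) ≤ (D:ℝ) := by exact_mod_cast hD

lemma hA (hD : 3 ≤ D) : (0:ℝ) < (D:ℝ) * ((D:ℝ) - 2) := by
  have := hDr hD; nlinarith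

lemma base_one_le (hD : 3 ≤ D) (r : ℝ) : (1:ℝ) ≤ 1 + r^2 / ((D:ℝ)*((D:ℝ)-2)) := by
  have h := div_nonneg (sq_nonneg r) (hA hD).le
  linarith

lemma W_pos (hD : 3 ≤ D) (r : ℝ) : 0 < W D r :=
  Real.rpow_pos_of_pos (lt_of_lt_of_le one_pos (base_one_le hD r)) _

lemma a_nonneg (hD : 3 ≤ D) : 0 ≤ ((D:ℝ)-2)/2 := by
  have := hDr hD; linarith

lemma W_le_one (hD : 3 ≤ D) (r : ℝ) : W D r ≤ 1 :=
  Real.rpow_le_one_of_one_le_of_nonpos (base_one_le hD r) (neg_nonpos.mpr (a_nonneg hD))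

lemma W_le_decay (hD : 3 ≤ D) {r : ℝ} (hr : 0 < r) :
    W D r ≤ ((D:ℝ)*((D:ℝ)-2)) ^ (((D:ℝ)-2)/2) * r ^ (-((D:ℝ)-2)) := by
  set A := (D:ℝ)*((D:ℝ)-2) with hAdef
  have hA' := hA hD
  have h2 : 0 < r^2/A := div_pos (pow_pos hr 2) hA'
  have h1 : r^2/A ≤ 1 + r^2/A := by linarith
  have hle : W D r ≤ (r^2/A) ^ (-(((D:ℝ)-2)/2)) :=
    Real.rpow_le_rpow_of_nonpos h2 h1 (neg_nonpos.mpr (a_nonneg hD))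
  refine hle.trans (le_of_eq ?_)
  rw [Real.div_rpow (sq_nonneg r) hA'.le, Real.rpow_neg hA'.le, div_eq_mul_inv, inv_inv,
    mul_comm]
  congr 1
  rw [← Real.rpow_natCast r 2, ← Real.rpow_mul hr.le]
  congr 1
  push_cast
  ring
end aux

section aux2
variable {D : ℕ}

lemma p_nonneg (hD : 3 ≤ D) : 0 ≤ ((D:ℝ)+2)/((D:ℝ)-2) := by
  have := hDr hD
  apply div_nonneg <;> linarith

lemma W_cont (hD : 3 ≤ D) : Continuous (W D) := by
  apply Continuous.rpow_const
  · continuity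
  · intro x
    exact Or.inl (ne_of_gt (lt_of_lt_of_le one_pos (base_one_le hD x)))

lemma f_cont (hD : 3 ≤ D) :
    Continuous (fun s : ℝ => W D s ^ (((D:ℝ)+2)/((D:ℝ)-2)) * s ^ ((D:ℝ)-1)) := by
  have h1 : Continuous (fun s : ℝ => W D s ^ (((D:ℝ)+2)/((D:ℝ)-2))) :=
    (W_cont hD).rpow_const (fun x => Or.inr (p_nonneg hD))
  have h2 : Continuous (fun s : ℝ => s ^ ((D:ℝ)-1)) := by
    apply Real.continuous_rpow_const
    have := hDr hD; linarith
  exact h1.mul h2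

lemma f_nonneg (hD : 3 ≤ D) (s : ℝ) (hs : 0 < s) :
    0 ≤ W D s ^ (((D:ℝ)+2)/((D:ℝ)-2)) * s ^ ((D:ℝ)-1) :=
  mul_nonneg (Real.rpow_nonneg (W_pos hD s).le _) (Real.rpow_nonneg hs.le _)

lemma f_integrable (hD : 3 ≤ D) :
    IntegrableOn (fun s : ℝ => W D s ^ (((D:ℝ)+2)/((D:ℝ)-2)) * s ^ ((D:ℝ)-1)) (Ioi 0) := by
  set f := fun s : ℝ => W D s ^ (((D:ℝ)+2)/((D:ℝ)-2)) * s ^ ((D:ℝ)-1) with hf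
  have hDR := hDr hD
  have hmeas : AEStronglyMeasurable f (volume.restrict (Ioc (0:ℝ) 1)) :=
    (f_cont hD).aestronglyMeasurable.restrict
  have h01 : IntegrableOn f (Ioc (0:ℝ) 1) := by
    apply Measure.integrableOn_of_bounded (M := 1) measure_Ioc_lt_top.ne
      (f_cont hD).aestronglyMeasurable
    rw [ae_restrict_iff' measurableSet_Ioc]
    refine ae_of_all _ fun s hs => ?_
    have hs0 : 0 < s := hs.1
    have h1 : W D s ^ (((D:ℝ)+2)/((D:ℝ)-2)) ≤ 1 :=
      Real.rpow_le_one (W_pos hD s).le (W_le_one hD s) (p_nonneg hD)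
    have h2 : s ^ ((D:ℝ)-1) ≤ 1 :=
      Real.rpow_le_one hs0.le hs.2 (by linarith)
    have := f_nonneg hD s hs0
    rw [Real.norm_eq_abs, abs_of_nonneg this]
    calc f s ≤ 1 * 1 := mul_le_mul h1 h2 (Real.rpow_nonneg hs0.le _) one_pos.le
    _ = 1 := by ring
  have h1i : IntegrableOn f (Ioi (1:ℝ)) := by
    set K := ((D:ℝ)*((D:ℝ)-2)) ^ (((D:ℝ)-2)/2) with hK
    have hKpos : 0 < K := Real.rpow_pos_of_pos (hA hD) _
    have hbound : IntegrableOn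
        (fun s : ℝ => K ^ (((D:ℝ)+2)/((D:ℝ)-2)) * s ^ (-3 : ℝ)) (Ioi 1) :=
      (integrableOn_Ioi_rpow_of_lt (by norm_num) one_pos).const_mul _
    apply hbound.integrable.mono' ((f_cont hD).aestronglyMeasurable.restrict)
    rw [ae_restrict_iff' measurableSet_Ioi]
    refine ae_of_all _ fun s hs => ?_
    have hs1 : (1:ℝ) < s := hs
    have hs0 : 0 < s := lt_trans one_pos hs1
    rw [Real.norm_eq_abs, abs_of_nonneg (f_nonneg hD s hs0)]
    have hW : W D s ≤ K * s ^ (-((D:ℝ)-2)) := W_le_decay hD hs0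
    have hWp : W D s ^ (((D:ℝ)+2)/((D:ℝ)-2))
        ≤ (K * s ^ (-((D:ℝ)-2))) ^ (((D:ℝ)+2)/((D:ℝ)-2)) :=
      Real.rpow_le_rpow (W_pos hD s).le hW (p_nonneg hD)
    have hrw : (K * s ^ (-((D:ℝ)-2))) ^ (((D:ℝ)+2)/((D:ℝ)-2))
        = K ^ (((D:ℝ)+2)/((D:ℝ)-2)) * s ^ (-((D:ℝ)+2)) := by
      have hne : ((D:ℝ)-2) ≠ 0 := by linarith
      have hexp : (-((D:ℝ)-2)) * (((D:ℝ)+2)/((D:ℝ)-2)) = -((D:ℝ)+2) := by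
        field_simp
      rw [Real.mul_rpow hKpos.le (Real.rpow_nonneg hs0.le _), ← Real.rpow_mul hs0.le, hexp]
    have hfin : s ^ (-((D:ℝ)+2)) * s ^ ((D:ℝ)-1) = s ^ (-3 : ℝ) := by
      rw [← Real.rpow_add hs0]
      congr 1
      ring
    calc f s ≤ K ^ (((D:ℝ)+2)/((D:ℝ)-2)) * s ^ (-((D:ℝ)+2)) * s ^ ((D:ℝ)-1) :=
          mul_le_mul_of_nonneg_right (hWp.trans (le_of_eq hrw)) (Real.rpow_nonneg hs0.le _)
      _ = K ^ (((D:ℝ)+2)/((D:ℝ)-2)) * s ^ (-3 : ℝ) := by rw [mul_assoc, hfin]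
  have : Ioc (0:ℝ) 1 ∪ Ioi 1 = Ioi 0 := Ioc_union_Ioi_eq_Ioi one_pos.le
  rw [← this]
  exact h01.union h1i

end aux2


/-- Pointwise bound `W(r) ≤ min(1, (D(D-2))^{(D-2)/2} r^{-(D-2)})` and the interaction
estimate `∫₀^∞ W_λ^{4/(D-2)} W_λ W_μ r^{D-1} dr ≲_D (λ/μ)^{(D-2)/2}` for `0 < λ ≤ μ`. -/
theorem stmt15 (D : ℕ) (hD : 3 ≤ D) :
    (∀ r > (0 : ℝ), W D r
        ≤ min 1 (((D : ℝ) * ((D : ℝ) - 2)) ^ (((D : ℝ) - 2) / 2) * r ^ (-((D : ℝ) - 2)))) ∧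
    ∃ C > (0 : ℝ), ∀ lam mu : ℝ, 0 < lam → lam ≤ mu →
      (∫ r in Ioi (0 : ℝ),
          (Wl D lam r) ^ ((4 : ℝ) / ((D : ℝ) - 2)) * Wl D lam r * Wl D mu r
            * r ^ ((D : ℝ) - 1))
        ≤ C * (lam / mu) ^ (((D : ℝ) - 2) / 2) := by
  have hDR := hDr hD
  have hne : ((D:ℝ)-2) ≠ 0 := by linarith
  set a : ℝ := ((D:ℝ)-2)/2 with ha
  set p : ℝ := ((D:ℝ)+2)/((D:ℝ)-2) with hp
  have hq : (4:ℝ)/((D:ℝ)-2) + 1 = p := by rw [hp]; field_simp; ring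
  set f : ℝ → ℝ := fun s => W D s ^ p * s ^ ((D:ℝ)-1) with hf
  have hfint : IntegrableOn f (Ioi 0) := f_integrable hD
  have hfnn : ∀ s ∈ Ioi (0:ℝ), 0 ≤ f s := fun s hs => f_nonneg hD s hs
  set I : ℝ := ∫ s in Ioi (0:ℝ), f s with hI
  have hInn : 0 ≤ I := setIntegral_nonneg measurableSet_Ioi hfnn
  constructor
  · intro r hr
    exact le_min (W_le_one hD r) (W_le_decay hD hr)
  · refine ⟨I + 1, by linarith, fun lam mu hlam hlm => ?_⟩
    have hmu : 0 < mu := lt_of_lt_of_le hlam hlm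
    set c0 : ℝ := (lam ^ (-a)) ^ p * mu ^ (-a) * lam ^ ((D:ℝ)-1) with hc0
    have hc0nn : 0 ≤ c0 := by
      apply mul_nonneg (mul_nonneg _ _) (Real.rpow_nonneg hlam.le _)
      · exact Real.rpow_nonneg (Real.rpow_nonneg hlam.le _) _
      · exact Real.rpow_nonneg hmu.le _
    -- pointwise bound
    have key : ∀ r ∈ Ioi (0:ℝ),
        Wl D lam r ^ ((4:ℝ)/((D:ℝ)-2)) * Wl D lam r * Wl D mu r * r ^ ((D:ℝ)-1)
          ≤ c0 * f (r / lam) := by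
      intro r hr
      have hr0 : (0:ℝ) < r := hr
      have hx : 0 < Wl D lam r :=
        mul_pos (Real.rpow_pos_of_pos hlam _) (W_pos hD _)
      have h1 : Wl D lam r ^ ((4:ℝ)/((D:ℝ)-2)) * Wl D lam r = Wl D lam r ^ p := by
        rw [← hq, Real.rpow_add hx, Real.rpow_one]
      have h2 : Wl D lam r ^ p = (lam ^ (-a)) ^ p * W D (r/lam) ^ p := by
        simp only [Wl, ← ha]
        exact Real.mul_rpow (Real.rpow_nonneg hlam.le _) (W_pos hD _).le
      have h3 : Wl D mu r ≤ mu ^ (-a) := by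
        simp only [Wl, ← ha]
        calc mu ^ (-a) * W D (r/mu) ≤ mu ^ (-a) * 1 :=
              mul_le_mul_of_nonneg_left (W_le_one hD _) (Real.rpow_nonneg hmu.le _)
          _ = mu ^ (-a) := mul_one _
      have hfr : lam ^ ((D:ℝ)-1) * f (r/lam) = W D (r/lam) ^ p * r ^ ((D:ℝ)-1) := by
        simp only [hf]
        rw [Real.div_rpow hr0.le hlam.le]
        have hlne : lam ^ ((D:ℝ)-1) ≠ 0 := (Real.rpow_pos_of_pos hlam _).ne'
        field_simp
      have hrhs : c0 * f (r/lam)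
          = (lam ^ (-a)) ^ p * W D (r/lam) ^ p * (mu ^ (-a) * r ^ ((D:ℝ)-1)) := by
        rw [hc0, mul_assoc ((lam ^ (-a)) ^ p * mu ^ (-a)), hfr]
        ring
      rw [h1, h2, hrhs]
      have hWlmu_nn : 0 ≤ Wl D mu r :=
        (mul_pos (Real.rpow_pos_of_pos hmu _) (W_pos hD _)).le
      calc (lam ^ (-a)) ^ p * W D (r/lam) ^ p * Wl D mu r * r ^ ((D:ℝ)-1)
          ≤ (lam ^ (-a)) ^ p * W D (r/lam) ^ p * mu ^ (-a) * r ^ ((D:ℝ)-1) := by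
            apply mul_le_mul_of_nonneg_right _ (Real.rpow_nonneg hr0.le _)
            exact mul_le_mul_of_nonneg_left h3
              (mul_nonneg (Real.rpow_nonneg (Real.rpow_nonneg hlam.le _) _)
                (Real.rpow_nonneg (W_pos hD _).le _))
        _ = (lam ^ (-a)) ^ p * W D (r/lam) ^ p * (mu ^ (-a) * r ^ ((D:ℝ)-1)) := by ring
    -- integrability of the bound
    have hcomp : IntegrableOn (fun r : ℝ => c0 * f (r / lam)) (Ioi 0) := by
      have h1 : IntegrableOn (fun r : ℝ => f (r * lam⁻¹)) (Ioi 0) := by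
        rw [integrableOn_Ioi_comp_mul_right_iff f 0 (inv_pos.mpr hlam)]
        simpa using hfint
      have := h1.const_mul c0
      simp only [div_eq_mul_inv]
      exact this
    -- integral comparison
    have hile : (∫ r in Ioi (0:ℝ),
          Wl D lam r ^ ((4:ℝ)/((D:ℝ)-2)) * Wl D lam r * Wl D mu r * r ^ ((D:ℝ)-1))
        ≤ ∫ r in Ioi (0:ℝ), c0 * f (r / lam) := by
      apply integral_mono_of_nonneg
      · refine (ae_restrict_mem measurableSet_Ioi).mono fun r hr => ?_
        have hr0 : (0:ℝ) < r := hr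
        have hx : 0 < Wl D lam r := mul_pos (Real.rpow_pos_of_pos hlam _) (W_pos hD _)
        have hy : 0 < Wl D mu r := mul_pos (Real.rpow_pos_of_pos hmu _) (W_pos hD _)
        exact mul_nonneg (mul_nonneg (mul_nonneg (Real.rpow_nonneg hx.le _) hx.le) hy.le)
          (Real.rpow_nonneg hr0.le _)
      · exact hcomp
      · exact (ae_restrict_mem measurableSet_Ioi).mono fun r hr => key r hr
    -- value of the bound integral
    have hval : (∫ r in Ioi (0:ℝ), c0 * f (r / lam)) = c0 * (lam * I) := by
      rw [integral_const_mul]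
      congr 1
      have : (∫ r in Ioi (0:ℝ), f (r / lam)) = ∫ r in Ioi (0:ℝ), f (r * lam⁻¹) := by
        simp [div_eq_mul_inv]
      rw [this, integral_comp_mul_right_Ioi f 0 (inv_pos.mpr hlam)]
      simp [hI, smul_eq_mul]
    -- exponent algebra
    have hlamexp : (lam ^ (-a)) ^ p * lam ^ ((D:ℝ)-1) * lam = lam ^ a := by
      rw [← Real.rpow_mul hlam.le, ← Real.rpow_add hlam, ← Real.rpow_add_one hlam.ne']
      congr 1
      rw [ha, hp]
      field_simp
      ring
    have hmuexp : lam ^ a * mu ^ (-a) = (lam/mu) ^ a := by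
      rw [Real.div_rpow hlam.le hmu.le, Real.rpow_neg hmu.le, div_eq_mul_inv]
    have hfinal : c0 * (lam * I) = I * (lam/mu) ^ a := by
      rw [hc0, ← hmuexp, ← hlamexp]
      ring
    calc (∫ r in Ioi (0:ℝ),
          Wl D lam r ^ ((4:ℝ)/((D:ℝ)-2)) * Wl D lam r * Wl D mu r * r ^ ((D:ℝ)-1))
        ≤ c0 * (lam * I) := hval ▸ hile
      _ = I * (lam/mu) ^ a := hfinal
      _ ≤ (I + 1) * (lam/mu) ^ a := by
          apply mul_le_mul_of_nonneg_right (by linarith)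
            (Real.rpow_nonneg (div_nonneg hlam.le hmu.le) _)
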